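/- Let d be a positive integer and a a positive integer. The critical values for coherent systems of type (2+ad, d, 1), i.e. the values α = (n₁d − d₁(2+ad))/(2+ad−n₁) with positive integers n₁, d₁ satisfying 0 < n₁ < 2+ad, 0 < d₁ < d, d₁/n₁ < (d−d₁)/(2+ad−n₁) and 0 < α < d/(1+ad), are exactly the numbers α_i = (d−2d₁)/(1+a(d−d₁)) where d₁ = ⌊(d−1)/2⌋ − i + 1 for integers 0 < i ≤ ⌊(d−1)/2⌋. -/

import Mathlib

set_option maxHeartbeats 1000000


/-- The critical values for coherent systems of type `(2+ad, d, 1)` are exactly the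
numbers `α_i = (d - 2d₁)/(1 + a(d - d₁))` with `d₁ = ⌊(d-1)/2⌋ - i + 1`, `0 < i ≤ ⌊(d-1)/2⌋`. -/
theorem critical_values (a d : ℕ) (ha : 0 < a) (hd : 0 < d) (α : ℚ) :
    (∃ n₁ d₁ : ℕ, 0 < n₁ ∧ n₁ < 2 + a * d ∧ 0 < d₁ ∧ d₁ < d ∧
      (d₁ : ℚ) / (n₁ : ℚ) < ((d : ℚ) - (d₁ : ℚ)) / ((2 + a * d - n₁ : ℕ) : ℚ) ∧
      α = ((n₁ : ℚ) * (d : ℚ) - (d₁ : ℚ) * (2 + (a : ℚ) * d)) / ((2 + (a : ℚ) * d) - n₁) ∧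
      0 < α ∧ α < (d : ℚ) / (1 + (a : ℚ) * d)) ↔
    (∃ i : ℕ, 0 < i ∧ i ≤ (d - 1) / 2 ∧
      α = ((d : ℚ) - 2 * (((d - 1) / 2 - i + 1 : ℕ) : ℚ)) /
            (1 + (a : ℚ) * ((d : ℚ) - (((d - 1) / 2 - i + 1 : ℕ) : ℚ)))) := by
  have ha' : (1:ℚ) ≤ (a:ℚ) := by exact_mod_cast ha
  have hd' : (1:ℚ) ≤ (d:ℚ) := by exact_mod_cast hd
  constructor
  · rintro ⟨n₁, d₁, hn₁, hn₁', hd₁, hd₁', hslope, hα, hα0, hα1⟩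
    have hle : n₁ ≤ 2 + a * d := hn₁'.le
    have hn₁Q : (n₁:ℚ) < 2 + (a:ℚ) * d := by exact_mod_cast hn₁'
    have hd₁Q : (d₁:ℚ) < (d:ℚ) := by exact_mod_cast hd₁'
    have hd₁Q0 : (1:ℚ) ≤ (d₁:ℚ) := by exact_mod_cast hd₁
    have hn₁Q0 : (1:ℚ) ≤ (n₁:ℚ) := by exact_mod_cast hn₁
    have hD : (0:ℚ) < 2 + (a:ℚ) * d - n₁ := by linarith
    have hE : (0:ℚ) < 1 + (a:ℚ) * d := by nlinarith
    -- numerator positive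
    have hNum : (d₁:ℚ) * (2 + (a:ℚ) * d) < (n₁:ℚ) * d := by
      rw [hα, div_pos_iff] at hα0
      rcases hα0 with ⟨h, _⟩ | ⟨_, h⟩
      · linarith
      · linarith
    -- upper bound inequality
    have hUp : ((n₁:ℚ) * d - d₁ * (2 + (a:ℚ) * d)) * (1 + (a:ℚ) * d)
        < (d:ℚ) * (2 + (a:ℚ) * d - n₁) := by
      rw [hα, div_lt_div_iff₀ hD hE] at hα1
      linarith
    -- n₁ = a * d₁ + 1
    have hkey : n₁ = a * d₁ + 1 := by
      by_contra hne
      rcases Nat.lt_or_ge n₁ (a * d₁ + 1) with h | h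
      · -- n₁ ≤ a*d₁, contradicts hNum
        have : (n₁:ℚ) ≤ (a:ℚ) * d₁ := by exact_mod_cast Nat.lt_succ_iff.mp h
        nlinarith
      · have h2 : a * d₁ + 2 ≤ n₁ := by omega
        have h2Q : (a:ℚ) * d₁ + 2 ≤ (n₁:ℚ) := by exact_mod_cast h2
        have hX : (0:ℚ) < (n₁:ℚ) * d - d - d₁ - a * d₁ * d := by
          nlinarith [mul_nonneg (show (0:ℚ) ≤ (n₁:ℚ) - ((a:ℚ) * d₁ + 2) by linarith)
            (show (0:ℚ) ≤ (d:ℚ) by linarith)]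
        nlinarith [mul_pos (show (0:ℚ) < 2 + (a:ℚ) * d by linarith) hX]
    have hn₁Qeq : (n₁:ℚ) = (a:ℚ) * d₁ + 1 := by exact_mod_cast hkey
    -- d > 2 d₁
    have h2d : 2 * d₁ < d := by
      have : (2:ℚ) * d₁ < d := by nlinarith
      exact_mod_cast this
    have hA : 0 < (d - 1) / 2 - d₁ + 1 := by omega
    have hB : (d - 1) / 2 - d₁ + 1 ≤ (d - 1) / 2 := by omega
    refine ⟨(d - 1) / 2 - d₁ + 1, hA, hB, ?_⟩
    have hidx : ((d - 1) / 2 - ((d - 1) / 2 - d₁ + 1) + 1 : ℕ) = d₁ := by omega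
    rw [hidx, hα, hn₁Qeq]
    have hden1 : (2 + (a:ℚ) * d - ((a:ℚ) * d₁ + 1)) ≠ 0 := by
      rw [← hn₁Qeq]; linarith
    have hden2 : (1 + (a:ℚ) * ((d:ℚ) - (d₁:ℚ))) ≠ 0 := by nlinarith
    field_simp
    ring
  · rintro ⟨i, hi0, hi, hα⟩
    obtain ⟨d₁, hd₁def⟩ : ∃ d₁ : ℕ, d₁ = (d - 1) / 2 - i + 1 := ⟨_, rfl⟩
    rw [← hd₁def] at hα
    have hd₁1 : 1 ≤ d₁ := by omega
    have h2d : 2 * d₁ < d := by omega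
    have hd₁d : d₁ < d := by omega
    have h2dQ : 2 * (d₁:ℚ) < d := by exact_mod_cast h2d
    have hd₁Q0 : (1:ℚ) ≤ (d₁:ℚ) := by exact_mod_cast hd₁1
    refine ⟨a * d₁ + 1, d₁, by omega, ?_, hd₁1, hd₁d, ?_, ?_, ?_, ?_⟩
    · have := Nat.mul_le_mul_left a hd₁d.le
      omega
    · -- slope condition
      have hsub : a * d₁ + 1 ≤ 2 + a * d := by
        have := Nat.mul_le_mul_left a hd₁d.le; omega
      have hcast : ((2 + a * d - (a * d₁ + 1) : ℕ) : ℚ)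
          = 1 + (a:ℚ) * ((d:ℚ) - d₁) := by
        push_cast [Nat.cast_sub hsub]
        ring
      rw [hcast]
      have hp1 : (0:ℚ) < ((a * d₁ + 1 : ℕ) : ℚ) := by positivity
      have hp2 : (0:ℚ) < 1 + (a:ℚ) * ((d:ℚ) - d₁) := by nlinarith
      rw [div_lt_div_iff₀ hp1 hp2]
      push_cast
      nlinarith
    · rw [hα]
      have hcast : ((a * d₁ + 1 : ℕ) : ℚ) = (a:ℚ) * d₁ + 1 := by push_cast; ring
      rw [hcast]
      have hden1 : (2 + (a:ℚ) * d - ((a:ℚ) * d₁ + 1)) ≠ 0 := by nlinarith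
      have hden2 : (1 + (a:ℚ) * ((d:ℚ) - (d₁:ℚ))) ≠ 0 := by nlinarith
      rw [div_eq_div_iff hden2 hden1]
      ring
    · rw [hα]
      apply div_pos (by linarith) (by nlinarith)
    · rw [hα]
      rw [div_lt_div_iff₀ (by nlinarith) (by nlinarith)]
      nlinarith [mul_pos (mul_pos (show (0:ℚ) < a by linarith) (show (0:ℚ) < d by linarith))
        (show (0:ℚ) < (d₁:ℚ) by linarith)]
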